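/- Let G be a finite group, M a non-abelian minimal normal subgroup of G, and N a normal subgroup of G with M ≤ N such that N = N₁ × ⋯ × N_ℓ is an internal direct product of subgroups N₁, ..., N_ℓ that are permuted among themselves by conjugation by G. Then M = (M ∩ N₁) × ⋯ × (M ∩ N_ℓ). -/
import Mathlib


open scoped Pointwise

namespace QP

variable {Ω : Type*}

/-- `P` is a partition of `Ω`. -/
def IsPartition (P : Set (Set Ω)) : Prop :=
  ∅ ∉ P ∧ ∀ ω : Ω, ∃! b : Set Ω, b ∈ P ∧ ω ∈ b

/-- A proper partition: neither `{Ω}` nor the partition into singletons. -/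
def IsProperPartition (P : Set (Set Ω)) : Prop :=
  IsPartition P ∧ P ≠ {Set.univ} ∧ ¬ ∀ b ∈ P, ∃ ω : Ω, b = {ω}

/-- The pointwise stabiliser of the partition `P` (kernel of the action on `P`),
as a subgroup of `Sym(Ω)`: the permutations fixing every block of `P` setwise. -/
def partKernel (P : Set (Set Ω)) : Subgroup (Equiv.Perm Ω) where
  carrier := {g | ∀ b ∈ P, g • b = b}
  one_mem' := by intro b hb; simp
  mul_mem' := by
    intro g h hg hh b hb
    rw [mul_smul, hh b hb, hg b hb]
  inv_mem' := by
    intro g hg b hb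
    rw [inv_smul_eq_iff, hg b hb]

/-- The setwise stabiliser of a partition `P` in `Sym(Ω)`. -/
def partStab (P : Set (Set Ω)) : Subgroup (Equiv.Perm Ω) :=
  MulAction.stabilizer (Equiv.Perm Ω) P

/-- The permutation of the set of blocks of `P` induced by an element of
the stabiliser of `P`. -/
noncomputable def blockPerm (P : Set (Set Ω)) (g : ↥(partStab P)) : Equiv.Perm ↥P where
  toFun b := ⟨(g : Equiv.Perm Ω) • (b : Set Ω), by
    have h1 : (g : Equiv.Perm Ω) • (b : Set Ω) ∈ (g : Equiv.Perm Ω) • P :=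
      Set.smul_mem_smul_set b.2
    rwa [g.2] at h1⟩
  invFun b := ⟨(g : Equiv.Perm Ω)⁻¹ • (b : Set Ω), by
    have h0 : (g : Equiv.Perm Ω) • P = P := g.2
    have h2 : ((g : Equiv.Perm Ω)⁻¹) • P = P := by
      rw [inv_smul_eq_iff, h0]
    have h1 : (g : Equiv.Perm Ω)⁻¹ • (b : Set Ω) ∈ (g : Equiv.Perm Ω)⁻¹ • P :=
      Set.smul_mem_smul_set b.2
    rwa [h2] at h1⟩
  left_inv b := by
    apply Subtype.ext
    simp
  right_inv b := by
    apply Subtype.ext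
    simp

/-- The homomorphism from the stabiliser of a partition `P` to the symmetric
group on the set of blocks of `P`. -/
noncomputable def componentHom (P : Set (Set Ω)) : ↥(partStab P) →* Equiv.Perm ↥P where
  toFun := blockPerm P
  map_one' := by
    apply Equiv.ext; intro b
    apply Subtype.ext
    simp [blockPerm]
  map_mul' := by
    intro g h
    apply Equiv.ext; intro b
    apply Subtype.ext
    simp [blockPerm, mul_smul]

/-- The component `G^P` of `G` on a partition `P` : the permutation group
induced on the set of blocks of `P` by the setwise stabiliser of `P` in `G`. -/
noncomputable def component (G : Subgroup (Equiv.Perm Ω)) (P : Set (Set Ω)) :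
    Subgroup (Equiv.Perm ↥P) :=
  Subgroup.map (componentHom P) (G.subgroupOf (partStab P))

section abstr
variable {X : Type*} [Group X]

/-- `N` is a normal subgroup of the (sub)group `G`. -/
def IsNormalIn (N G : Subgroup X) : Prop :=
  N ≤ G ∧ ∀ g ∈ G, ∀ n ∈ N, g * n * g⁻¹ ∈ N

/-- `N` is a minimal normal subgroup of `G`. -/
def IsMinimalNormalIn (N G : Subgroup X) : Prop :=
  IsNormalIn N G ∧ N ≠ ⊥ ∧
    ∀ K : Subgroup X, IsNormalIn K G → K ≠ ⊥ → K ≤ N → K = N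

/-- The socle of `G`: the subgroup generated by all minimal normal subgroups. -/
def socle (G : Subgroup X) : Subgroup X :=
  ⨆ N ∈ {N : Subgroup X | IsMinimalNormalIn N G}, N

/-- `M` is the internal direct product of the family `N` of subgroups. -/
def IsInternalDirectProductOver {ι : Type*} (M : Subgroup X) (N : ι → Subgroup X) : Prop :=
  (∀ i, N i ≤ M) ∧
  (∀ i j, i ≠ j → ∀ x ∈ N i, ∀ y ∈ N j, Commute x y) ∧
  (⨆ i, N i) = M ∧
  (∀ i, N i ⊓ (⨆ j ∈ ({i}ᶜ : Set ι), N j) = ⊥)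

end abstr

/-- A transitive permutation group on `α`. -/
def IsTransitivePerm {α : Type*} (H : Subgroup (Equiv.Perm α)) : Prop :=
  ∀ a b : α, ∃ g ∈ H, g a = b

/-- A regular permutation group: transitive with trivial point stabilisers. -/
def IsRegularPerm {α : Type*} (H : Subgroup (Equiv.Perm α)) : Prop :=
  IsTransitivePerm H ∧ ∀ g ∈ H, ∀ a : α, g a = a → g = 1

/-- A semiregular permutation group: all point stabilisers are trivial. -/
def IsSemiregularPerm {α : Type*} (H : Subgroup (Equiv.Perm α)) : Prop :=
  ∀ g ∈ H, ∀ a : α, g a = a → g = 1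

/-- A quasiprimitive permutation group: transitive, and every nontrivial
normal subgroup is transitive. -/
def IsQuasiprimitivePerm {α : Type*} (H : Subgroup (Equiv.Perm α)) : Prop :=
  IsTransitivePerm H ∧
    ∀ N : Subgroup (Equiv.Perm α), IsNormalIn N H → N ≠ ⊥ → IsTransitivePerm N

section indexed

variable {ι : Type*}

/-- A Cartesian decomposition, indexed form: a family of pairwise distinct
proper partitions such that any choice of blocks, one from each partition,
intersects in exactly one point. -/
def IsCartesianDecomp (Γ : ι → Set (Set Ω)) : Prop :=
  (∀ i, IsProperPartition (Γ i)) ∧ Function.Injective Γ ∧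
  ∀ c : ι → Set Ω, (∀ i, c i ∈ Γ i) → ∃! ω : Ω, ∀ i, ω ∈ c i

/-- The Cartesian decomposition `Γ` is `M`-normal, with `N i` playing the
role of `M^{Γ i}`: each partition is `M`-invariant, `M` is the internal direct
product of the `N i`, each `N i` acts faithfully on `Γ i`, and
`∏_{j ≠ i} N j` is the kernel of the `M`-action on `Γ i`. -/
structure IsNormalDecomp (M : Subgroup (Equiv.Perm Ω)) (Γ : ι → Set (Set Ω))
    (N : ι → Subgroup (Equiv.Perm Ω)) : Prop where
  invariant : ∀ i, ∀ g ∈ M, ∀ b ∈ Γ i, g • b ∈ Γ i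
  product : IsInternalDirectProductOver M N
  faithful : ∀ i, N i ⊓ partKernel (Γ i) = ⊥
  kernel : ∀ i, M ⊓ partKernel (Γ i) = ⨆ j ∈ ({i}ᶜ : Set ι), N j

end indexed

section setbased

/-- A Cartesian decomposition, as a (finite) set of proper partitions. -/
def IsCartesianDecompSet (E : Set (Set (Set Ω))) : Prop :=
  E.Finite ∧ (∀ P ∈ E, IsProperPartition P) ∧
  ∀ c : Set (Set Ω) → Set Ω, (∀ P ∈ E, c P ∈ P) → ∃! ω : Ω, ∀ P ∈ E, ω ∈ c P

/-- `E` is a homogeneous Cartesian decomposition: all partitions have the same size. -/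
def IsHomogeneous (E : Set (Set (Set Ω))) : Prop :=
  ∀ P ∈ E, ∀ Q ∈ E, Nat.card ↥P = Nat.card ↥Q

/-- `E` is invariant under `G`: `G` permutes the partitions in `E`. -/
def InvariantDec (G : Subgroup (Equiv.Perm Ω)) (E : Set (Set (Set Ω))) : Prop :=
  ∀ g ∈ G, ∀ P ∈ E, g • P ∈ E

/-- `G` is transitive on `E`. -/
def TransitiveOnDec (G : Subgroup (Equiv.Perm Ω)) (E : Set (Set (Set Ω))) : Prop :=
  ∀ P ∈ E, ∀ Q ∈ E, ∃ g ∈ G, g • P = Q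

/-- The Cartesian decomposition `E` is `M`-normal: `M` fixes each partition
in `E` setwise, and `M` is the internal direct product of subgroups `N P`
(`P ∈ E`), where `∏_{Q ≠ P} N Q` is the kernel of the `M`-action on `P`. -/
def IsNormalDecompSet (M : Subgroup (Equiv.Perm Ω)) (E : Set (Set (Set Ω))) : Prop :=
  (∀ g ∈ M, ∀ P ∈ E, g • P = P) ∧
  ∃ N : Set (Set Ω) → Subgroup (Equiv.Perm Ω),
    (∀ P ∈ E, N P ≤ M) ∧
    (∀ P Q, P ∈ E → Q ∈ E → P ≠ Q → ∀ x ∈ N P, ∀ y ∈ N Q, Commute x y) ∧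
    (⨆ P ∈ E, N P) = M ∧
    (∀ P ∈ E, N P ⊓ (⨆ Q ∈ E \ {P}, N Q) = ⊥) ∧
    (∀ P ∈ E, M ⊓ partKernel P = ⨆ Q ∈ E \ {P}, N Q)

/-- `E` is a blow-up decomposition for `G`: a `G`-invariant Cartesian
decomposition on which `G` acts transitively, which is `M`-normal for some
transitive normal subgroup `M` of `G` such that `M^Γ = Soc(G^Γ)` for every
`Γ ∈ E`. -/
def IsBlowUpDecomp (G : Subgroup (Equiv.Perm Ω)) (E : Set (Set (Set Ω))) : Prop :=
  IsCartesianDecompSet E ∧ InvariantDec G E ∧ TransitiveOnDec G E ∧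
  ∃ M : Subgroup (Equiv.Perm Ω), IsNormalIn M G ∧ IsTransitivePerm M ∧
    IsNormalDecompSet M E ∧ ∀ P ∈ E, component M P = socle (component G P)

end setbased

end QP


/-- If M is a non-abelian minimal normal subgroup of the finite group G,
N ⊴ G with M ≤ N, and N = N₁ × ⋯ × N_ℓ is an internal direct product whose factors
are permuted by G-conjugation, then M = (M ∩ N₁) × ⋯ × (M ∩ N_ℓ). -/
theorem minimal_normal_inherits_direct_decomposition
    {G : Type*} [Group G] [Finite G] {ι : Type*} [Finite ι]
    (M N : Subgroup G) (Ni : ι → Subgroup G)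
    (hMnormal : M.Normal) (hMne : M ≠ ⊥)
    (hMmin : ∀ K : Subgroup G, K.Normal → K ≠ ⊥ → K ≤ M → K = M)
    (hMnonab : ¬ ∀ x ∈ M, ∀ y ∈ M, x * y = y * x)
    (hNnormal : N.Normal) (hMN : M ≤ N)
    (hprod : QP.IsInternalDirectProductOver N Ni)
    (hperm : ∀ g : G, ∀ i : ι, ∃ j : ι,
      (Ni i).map (MulAut.conj g).toMonoidHom = Ni j) :
    QP.IsInternalDirectProductOver M (fun i => M ⊓ Ni i) := by
  have hcomm : ∀ i j, i ≠ j → ∀ x ∈ Ni i, ∀ y ∈ Ni j, Commute x y := hprod.2.1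
  have hsupN : (⨆ i, Ni i) = N := hprod.2.2.1
  -- each `Ni i` is normal in `N`
  have hNiN : ∀ i, ∀ n ∈ N, ∀ x ∈ Ni i, n * x * n⁻¹ ∈ Ni i := by
    intro i n hn
    rw [← hsupN] at hn
    refine Subgroup.iSup_induction (C := fun n => ∀ x ∈ Ni i, n * x * n⁻¹ ∈ Ni i) _ hn
      ?_ ?_ ?_
    · intro j y hy x hx
      by_cases hji : j = i
      · subst hji; exact mul_mem (mul_mem hy hx) (inv_mem hy)
      · have h := (hcomm j i hji y hy x hx).eq
        have hyx : y * x * y⁻¹ = x := by rw [h]; group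
        rw [hyx]; exact hx
    · intro x hx; simpa using hx
    · intro a b ha hb x hx
      have hab : a * b * x * (a * b)⁻¹ = a * (b * x * b⁻¹) * a⁻¹ := by group
      rw [hab]
      exact ha _ (hb x hx)
  by_cases hall : ∀ i, M ⊓ Ni i = ⊥
  · -- then M would be abelian: contradiction
    exfalso
    apply hMnonab
    intro x hx y hy
    have key : ∀ i, ∀ z ∈ Ni i, x * z = z * x := by
      intro i z hz
      have hc : x * z * x⁻¹ * z⁻¹ ∈ M ⊓ Ni i := by
        refine Subgroup.mem_inf.mpr ⟨?_, ?_⟩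
        · have h1 : z * x⁻¹ * z⁻¹ ∈ M := hMnormal.conj_mem _ (inv_mem hx) z
          have h2 : x * z * x⁻¹ * z⁻¹ = x * (z * x⁻¹ * z⁻¹) := by group
          rw [h2]; exact mul_mem hx h1
        · exact mul_mem (hNiN i x (hMN hx) z hz) (inv_mem hz)
      rw [hall i, Subgroup.mem_bot] at hc
      have hc1 : (x * z) * (z * x)⁻¹ = 1 := by
        have h2 : (x * z) * (z * x)⁻¹ = x * z * x⁻¹ * z⁻¹ := by group
        rw [h2]; exact hc
      exact mul_inv_eq_one.mp hc1
    have hyN : y ∈ (⨆ i, Ni i) := hsupN ▸ hMN hy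
    refine Subgroup.iSup_induction (C := fun y => x * y = y * x) _ hyN
      (fun i z hz => key i z hz) (by simp) ?_
    intro a b ha hb
    calc x * (a * b) = (x * a) * b := by group
    _ = a * (x * b) := by rw [ha]; group
    _ = (a * b) * x := by rw [hb]; group
  · push_neg at hall
    obtain ⟨i₀, hi₀⟩ := hall
    set K := ⨆ i, M ⊓ Ni i with hK
    have hKM : K ≤ M := iSup_le fun i => inf_le_left
    have hKnormalMem : ∀ g : G, ∀ k ∈ K, g * k * g⁻¹ ∈ K := by
      intro g k hk
      refine Subgroup.iSup_induction (C := fun k => g * k * g⁻¹ ∈ K) _ hk ?_ (by simpa using one_mem K) ?_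
      · intro i y hy
        obtain ⟨j, hj⟩ := hperm g i
        have hy1 : y ∈ M := (Subgroup.mem_inf.mp hy).1
        have hy2 : y ∈ Ni i := (Subgroup.mem_inf.mp hy).2
        have h1 : g * y * g⁻¹ ∈ M := hMnormal.conj_mem _ hy1 g
        have h2 : g * y * g⁻¹ ∈ Ni j := by
          rw [← hj, Subgroup.mem_map]
          exact ⟨y, hy2, by simp [MulAut.conj_apply]⟩
        exact le_iSup (fun i => M ⊓ Ni i) j (Subgroup.mem_inf.mpr ⟨h1, h2⟩)
      · intro a b ha hb
        have hab : g * (a * b) * g⁻¹ = (g * a * g⁻¹) * (g * b * g⁻¹) := by group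
        rw [hab]; exact mul_mem ha hb
    have hKnormal : K.Normal := ⟨fun k hk g => hKnormalMem g k hk⟩
    have hKne : K ≠ ⊥ := by
      intro h
      apply hi₀
      have hle : M ⊓ Ni i₀ ≤ K := le_iSup (fun i => M ⊓ Ni i) i₀
      rw [h] at hle
      exact le_bot_iff.mp hle
    have hKeq : K = M := hMmin K hKnormal hKne hKM
    refine ⟨fun i => inf_le_left, ?_, hKeq, ?_⟩
    · intro i j hij a ha b hb
      exact hcomm i j hij a (Subgroup.mem_inf.mp ha).2 b (Subgroup.mem_inf.mp hb).2
    · intro i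
      have hle : (M ⊓ Ni i) ⊓ (⨆ j ∈ ({i}ᶜ : Set ι), M ⊓ Ni j) ≤
          Ni i ⊓ (⨆ j ∈ ({i}ᶜ : Set ι), Ni j) :=
        inf_le_inf inf_le_right (iSup₂_mono fun j _ => inf_le_right)
      rw [hprod.2.2.2 i] at hle
      exact le_bot_iff.mp hle
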